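/- arXiv:2112.07142 — 2 statements merged into one kernel-verified Lean document; each statement's English description precedes it below -/
import Mathlib

section
/- For every t > 1 with √(π/(4t)) < 1, ∫_{ℝ⁴} e^{−|ξ|²} sin²(t|ξ|²)/|ξ|⁴ dξ ≥ (ω₄ e^{−1}/8)(log t + log 4 − log π), where ω₄ is the surface area of the unit sphere in ℝ⁴. -/
set_option maxHeartbeats 1000000

open MeasureTheory

open Real Set intervalIntegral

/-- surface area of the unit sphere in ℝⁿ, via ω_n = n · vol(unit ball) -/
noncomputable def omegaSurf (n : ℕ) : ℝ :=
  n * (volume (Metric.ball (0 : EuclideanSpace ℝ (Fin n)) 1)).toReal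


lemma cos_div_integral_nonpos {x : ℝ} (hx : π/2 ≤ x) :
    ∫ v in (π/2)..x, Real.cos v / v ≤ 0 := by
  have hπ : (0:ℝ) < π/2 := by positivity
  have hx0 : (0:ℝ) < x := lt_of_lt_of_le hπ hx
  have hmem : ∀ v ∈ Set.uIcc (π/2) x, (0:ℝ) < v := by
    rw [Set.uIcc_of_le hx]
    intro v hv; exact lt_of_lt_of_le hπ hv.1
  -- FTC for sin v / v
  have hftc1 : ∫ v in (π/2)..x, (Real.cos v / v - Real.sin v / v^2) =
      Real.sin x / x - 2/π := by
    have := intervalIntegral.integral_eq_sub_of_hasDerivAt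
      (f := fun v => Real.sin v / v)
      (f' := fun v => Real.cos v / v - Real.sin v / v^2)
      (a := π/2) (b := x)
      (fun v hv => by
        have hv0 : v ≠ 0 := (hmem v hv).ne'
        have := (Real.hasDerivAt_sin v).div (hasDerivAt_id v) hv0
        convert this using 1
        · rfl
        · rfl
        · simp only [id]
          field_simp)
      ?_
    · rw [this]
      rw [Real.sin_pi_div_two, one_div_div]
    · apply ContinuousOn.intervalIntegrable
      apply ContinuousOn.sub
      · exact ContinuousOn.div (Real.continuous_cos.continuousOn)
          continuousOn_id (fun v hv => (hmem v hv).ne')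
      · exact ContinuousOn.div (Real.continuous_sin.continuousOn)
          (by fun_prop) (fun v hv => pow_ne_zero _ (hmem v hv).ne')
  have hftc2 : ∫ v in (π/2)..x, (v^2)⁻¹ = 2/π - x⁻¹ := by
    have := intervalIntegral.integral_eq_sub_of_hasDerivAt
      (f := fun v => -v⁻¹) (f' := fun v => (v^2)⁻¹) (a := π/2) (b := x)
      (fun v hv => by
        have hv0 : v ≠ 0 := (hmem v hv).ne'
        have := (hasDerivAt_inv hv0).neg
        convert this using 1
        · rfl
        · rw [neg_neg])
      ?_
    · rw [this]
      rw [inv_div]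
      ring
    · apply ContinuousOn.intervalIntegrable
      exact ContinuousOn.inv₀ (by fun_prop) (fun v hv => pow_ne_zero _ (hmem v hv).ne')
  have hint_sin : IntervalIntegrable (fun v => Real.sin v / v^2) volume (π/2) x := by
    apply ContinuousOn.intervalIntegrable
    exact ContinuousOn.div (Real.continuous_sin.continuousOn)
      (by fun_prop) (fun v hv => pow_ne_zero _ (hmem v hv).ne')
  have hint_inv : IntervalIntegrable (fun v => (v^2)⁻¹) volume (π/2) x := by
    apply ContinuousOn.intervalIntegrable
    exact ContinuousOn.inv₀ (by fun_prop) (fun v hv => pow_ne_zero _ (hmem v hv).ne')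
  have hint_cos : IntervalIntegrable (fun v => Real.cos v / v) volume (π/2) x := by
    apply ContinuousOn.intervalIntegrable
    exact ContinuousOn.div (Real.continuous_cos.continuousOn)
      continuousOn_id (fun v hv => (hmem v hv).ne')
  have hsplit : ∫ v in (π/2)..x, Real.cos v / v =
      (Real.sin x / x - 2/π) + ∫ v in (π/2)..x, Real.sin v / v^2 := by
    rw [← hftc1, intervalIntegral.integral_sub hint_cos hint_sin]
    ring
  have hmono : ∫ v in (π/2)..x, Real.sin v / v^2 ≤ ∫ v in (π/2)..x, (v^2)⁻¹ := by
    apply intervalIntegral.integral_mono_on hx hint_sin hint_inv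
    intro v hv
    have hv0 : (0:ℝ) < v := lt_of_lt_of_le hπ hv.1
    rw [div_le_iff₀ (by positivity)]
    rw [inv_mul_cancel₀ (by positivity)]
    exact Real.sin_le_one v
  have hsin : Real.sin x ≤ 1 := Real.sin_le_one x
  rw [hsplit]
  have : Real.sin x / x - 2/π + (2/π - x⁻¹) ≤ 0 := by
    have h1 : Real.sin x / x ≤ 1 / x := div_le_div_of_nonneg_right hsin hx0.le
    rw [one_div] at h1
    linarith
  calc Real.sin x / x - 2/π + ∫ v in (π/2)..x, Real.sin v / v^2
      ≤ Real.sin x / x - 2/π + (2/π - x⁻¹) := by linarith [hmono, hftc2.le, hftc2.ge]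
    _ ≤ 0 := this

lemma oneD_bound (t : ℝ) (ht : 1 < t) (hθ : Real.sqrt (π / (4 * t)) < 1) :
    (Real.exp (-1) / 8) * (Real.log t + Real.log 4 - Real.log π) ≤
      ∫ y in Ioi (0:ℝ), y ^ 3 • (Real.exp (-y^2) * Real.sin (t*y^2)^2 / y^4) := by
  have ht0 : (0:ℝ) < t := by linarith
  have hπ : (0:ℝ) < π := Real.pi_pos
  set a : ℝ := π / (4*t) with ha_def
  have ha0 : 0 < a := by positivity
  set θ : ℝ := Real.sqrt a with hθ_def
  have hθ0 : 0 < θ := Real.sqrt_pos.2 ha0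
  have hθsq : θ^2 = a := Real.sq_sqrt ha0.le
  have hθ1 : θ < 1 := hθ
  have ha1 : a < 1 := by nlinarith
  set L : ℝ := Real.log t + Real.log 4 - Real.log π with hL_def
  have hLpos : 0 ≤ L := by
    have h4 : Real.log π ≤ Real.log 4 := by
      apply Real.log_le_log hπ
      linarith [Real.pi_le_four]
    have ht' : 0 ≤ Real.log t := Real.log_nonneg ht.le
    linarith
  have hLa : Real.log 1 - Real.log a = L := by
    rw [Real.log_one, ha_def, Real.log_div hπ.ne' (by positivity),
      Real.log_mul (by norm_num) ht0.ne', hL_def]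
    ring
  -- integrand nonneg and integrable on Ioi 0
  set g : ℝ → ℝ := fun y => y ^ 3 • (Real.exp (-y^2) * Real.sin (t*y^2)^2 / y^4) with hg_def
  have hg_int : IntegrableOn g (Ioi 0) := by
    have hbase : IntegrableOn (fun y : ℝ => y ^ (3:ℝ) * Real.exp (-1*y^2)) (Ioi 0) :=
      integrableOn_rpow_mul_exp_neg_mul_sq one_pos (by norm_num)
    have hbase' : IntegrableOn (fun y : ℝ => t^2 * (y ^ (3:ℝ) * Real.exp (-1*y^2))) (Ioi 0) :=
      hbase.const_mul _
    have hgm : Measurable g := by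
      simp only [hg_def, smul_eq_mul]
      fun_prop
    apply hbase'.mono' hgm.aestronglyMeasurable
    filter_upwards [ae_restrict_mem measurableSet_Ioi] with y hy
    have hy0 : (0:ℝ) < y := hy
    have hsin : Real.sin (t*y^2)^2 ≤ (t*y^2)^2 := Real.sin_sq_le_sq
    have hsin0 : 0 ≤ Real.sin (t*y^2)^2 := sq_nonneg _
    have h3 : y ^ (3:ℝ) = y ^ (3:ℕ) := by
      rw [← Real.rpow_natCast y 3]; norm_num
    simp only [hg_def, smul_eq_mul]
    rw [Real.norm_eq_abs, abs_of_nonneg (by positivity), h3, neg_one_mul]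
    have expand : y ^ 3 * (Real.exp (-y^2) * Real.sin (t*y^2)^2 / y^4) =
        Real.exp (-y^2) * Real.sin (t*y^2)^2 / y := by
      field_simp
    rw [expand, div_le_iff₀ hy0]
    nlinarith [mul_le_mul_of_nonneg_left hsin (Real.exp_pos (-y^2)).le, Real.exp_pos (-y^2)]
  have hg_nonneg : 0 ≤ᵐ[volume.restrict (Ioi (0:ℝ))] g := by
    filter_upwards [ae_restrict_mem measurableSet_Ioi] with y hy
    have hy0 : (0:ℝ) < y := hy
    have : (0:ℝ) ≤ Real.sin (t*y^2)^2 := sq_nonneg _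
    simp only [hg_def, smul_eq_mul]
    positivity
  -- restrict to Ioc θ 1
  have hstep1 : ∫ y in Ioc θ 1, g y ≤ ∫ y in Ioi (0:ℝ), g y := by
    apply setIntegral_mono_set hg_int hg_nonneg
    filter_upwards with y hy
    exact lt_of_lt_of_le hθ0 hy.1.le
  have hIoc : ∫ y in Ioc θ 1, g y = ∫ y in θ..1, g y :=
    (intervalIntegral.integral_of_le hθ1.le).symm
  -- substitution u = y^2
  set G : ℝ → ℝ := fun u => Real.exp (-u) * Real.sin (t*u)^2 / (2*u) with hG_def
  have hGcont : ContinuousOn G {u : ℝ | 0 < u} := by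
    apply ContinuousOn.div (by fun_prop) (by fun_prop)
    intro u hu
    have : (0:ℝ) < u := hu
    positivity
  have hcongr : ∫ y in θ..1, g y = ∫ y in θ..1, (2*y) • G (y^2) := by
    apply intervalIntegral.integral_congr
    intro y hy
    rw [Set.uIcc_of_le hθ1.le] at hy
    have hy0 : (0:ℝ) < y := lt_of_lt_of_le hθ0 hy.1
    simp only [hg_def, hG_def, smul_eq_mul]
    field_simp
  have hsubst : ∫ y in θ..1, (2*y) • G (y^2) = ∫ u in a..1, G u := by
    have h := intervalIntegral.integral_comp_smul_deriv''
      (f := fun y : ℝ => y^2) (f' := fun y : ℝ => 2*y) (g := G) (a := θ) (b := 1)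
      (by fun_prop)
      (fun y hy => by
        have := (hasDerivAt_pow 2 y).hasDerivWithinAt (s := Set.Ioi y)
        convert this using 1
        · rfl
        · rfl
        · simp [mul_comm]
        )
      (by fun_prop)
      (hGcont.mono ?_)
    · simp only [Function.comp] at h
      rw [h]
      norm_num [hθsq]
    · rintro u ⟨y, hy, rfl⟩
      rw [Set.uIcc_of_le hθ1.le] at hy
      have hy0 : (0:ℝ) < y := lt_of_lt_of_le hθ0 hy.1
      exact pow_pos hy0 2
  -- pointwise bound G ≥ H
  set H : ℝ → ℝ := fun u => (Real.exp (-1) / 4) * (1/u - Real.cos (2*t*u)/u) with hH_def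
  have hGH : ∀ u ∈ Icc a 1, H u ≤ G u := by
    intro u hu
    have hu0 : 0 < u := lt_of_lt_of_le ha0 hu.1
    have hexp : Real.exp (-1) ≤ Real.exp (-u) := Real.exp_le_exp.2 (by linarith [hu.2])
    have hne : (u:ℝ) ≠ 0 := hu0.ne'
    have e1 : G u = Real.exp (-u) * ((1 - Real.cos (2*t*u))/(4*u)) := by
      simp only [hG_def]
      rw [Real.sin_sq_eq_half_sub, show 2*(t*u) = 2*t*u by ring]
      field_simp
      ring
    have e2 : H u = Real.exp (-1) * ((1 - Real.cos (2*t*u))/(4*u)) := by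
      simp only [hH_def]
      field_simp
    rw [e1, e2]
    apply mul_le_mul_of_nonneg_right hexp
    have hcos' : Real.cos (2*t*u) ≤ 1 := Real.cos_le_one _
    apply div_nonneg (by linarith) (by positivity)
  have hHint : IntervalIntegrable H volume a 1 := by
    apply ContinuousOn.intervalIntegrable
    rw [Set.uIcc_of_le ha1.le]
    apply ContinuousOn.mul continuousOn_const
    apply ContinuousOn.sub
    · exact ContinuousOn.div continuousOn_const continuousOn_id
        (fun u hu => (lt_of_lt_of_le ha0 hu.1).ne')
    · exact ContinuousOn.div (by fun_prop) continuousOn_id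
        (fun u hu => (lt_of_lt_of_le ha0 hu.1).ne')
  have hGint : IntervalIntegrable G volume a 1 := by
    apply ContinuousOn.intervalIntegrable
    rw [Set.uIcc_of_le ha1.le]
    exact hGcont.mono (fun u hu => lt_of_lt_of_le ha0 hu.1)
  have hstep2 : ∫ u in a..1, H u ≤ ∫ u in a..1, G u :=
    intervalIntegral.integral_mono_on ha1.le hHint hGint hGH
  -- compute ∫ H
  have hint1 : IntervalIntegrable (fun u : ℝ => 1/u) volume a 1 := by
    apply ContinuousOn.intervalIntegrable
    rw [Set.uIcc_of_le ha1.le]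
    exact ContinuousOn.div continuousOn_const continuousOn_id
      (fun u hu => (lt_of_lt_of_le ha0 hu.1).ne')
  have hint2 : IntervalIntegrable (fun u : ℝ => Real.cos (2*t*u)/u) volume a 1 := by
    apply ContinuousOn.intervalIntegrable
    rw [Set.uIcc_of_le ha1.le]
    exact ContinuousOn.div (by fun_prop) continuousOn_id
      (fun u hu => (lt_of_lt_of_le ha0 hu.1).ne')
  have hHval : ∫ u in a..1, H u =
      (Real.exp (-1) / 4) * (L - ∫ u in a..1, Real.cos (2*t*u)/u) := by
    simp only [hH_def]
    rw [intervalIntegral.integral_const_mul, intervalIntegral.integral_sub hint1 hint2]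
    rw [integral_one_div (by
      rw [Set.uIcc_of_le ha1.le]
      intro h
      exact absurd h.1 (not_le.2 ha0) : (0:ℝ) ∉ Set.uIcc a 1)]
    rw [Real.log_div one_ne_zero ha0.ne', hLa]
  -- cos integral nonpositive
  have hcosint : ∫ u in a..1, Real.cos (2*t*u)/u ≤ 0 := by
    have h2t : (2*t) ≠ 0 := by positivity
    have hcomp : ∀ u : ℝ, Real.cos (2*t*u)/u = (2*t) * ((fun v => Real.cos v / v) (2*t*u)) := by
      intro u
      rcases eq_or_ne u 0 with rfl | hu
      · simp
      · field_simp
    calc ∫ u in a..1, Real.cos (2*t*u)/u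
        = ∫ u in a..1, (2*t) * ((fun v => Real.cos v / v) (2*t*u)) := by
          simp_rw [hcomp]
      _ = (2*t) * ((2*t)⁻¹ • ∫ v in (2*t*a)..(2*t*1), Real.cos v / v) := by
          rw [intervalIntegral.integral_const_mul,
            intervalIntegral.integral_comp_mul_left (fun v => Real.cos v / v) h2t]
      _ = ∫ v in (π/2)..(2*t), Real.cos v / v := by
          have haa : 2*t*a = π/2 := by
            rw [ha_def]; field_simp; ring
          rw [haa, smul_eq_mul, mul_one]
          rw [← mul_assoc, mul_inv_cancel₀ h2t, one_mul]
      _ ≤ 0 := cos_div_integral_nonpos (by nlinarith [Real.pi_le_four])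
  -- combine
  calc (Real.exp (-1) / 8) * L
      ≤ (Real.exp (-1) / 4) * L := by
        have := Real.exp_pos (-1:ℝ)
        nlinarith
    _ ≤ (Real.exp (-1) / 4) * (L - ∫ u in a..1, Real.cos (2*t*u)/u) := by
        have := Real.exp_pos (-1:ℝ)
        nlinarith
    _ = ∫ u in a..1, H u := hHval.symm
    _ ≤ ∫ u in a..1, G u := hstep2
    _ = ∫ y in θ..1, (2*y) • G (y^2) := hsubst.symm
    _ = ∫ y in θ..1, g y := hcongr.symm
    _ = ∫ y in Ioc θ 1, g y := hIoc.symm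
    _ ≤ ∫ y in Ioi (0:ℝ), g y := hstep1

theorem U_log_lower_bound (t : ℝ) (ht : 1 < t)
    (hθ : Real.sqrt (Real.pi / (4 * t)) < 1) :
    ∫ ξ : EuclideanSpace ℝ (Fin 4),
        Real.exp (-‖ξ‖ ^ 2) * Real.sin (t * ‖ξ‖ ^ 2) ^ 2 / ‖ξ‖ ^ 4 ≥
      (omegaSurf 4 * Real.exp (-1) / 8) *
        (Real.log t + Real.log 4 - Real.log Real.pi) := by
  have hpolar := MeasureTheory.integral_fun_norm_addHaar
    (volume : Measure (EuclideanSpace ℝ (Fin 4)))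
    (fun y => Real.exp (-y^2) * Real.sin (t*y^2)^2 / y^4)
  simp only [finrank_euclideanSpace, Fintype.card_fin] at hpolar
  rw [ge_iff_le, show (∫ ξ : EuclideanSpace ℝ (Fin 4),
      Real.exp (-‖ξ‖ ^ 2) * Real.sin (t * ‖ξ‖ ^ 2) ^ 2 / ‖ξ‖ ^ 4) =
      ∫ ξ : EuclideanSpace ℝ (Fin 4),
        (fun y => Real.exp (-y^2) * Real.sin (t*y^2)^2 / y^4) ‖ξ‖ from rfl, hpolar]
  set c : ℝ := (volume (Metric.ball (0 : EuclideanSpace ℝ (Fin 4)) 1)).toReal with hc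
  have hc0 : 0 ≤ c := ENNReal.toReal_nonneg
  set I : ℝ := ∫ y in Ioi (0:ℝ), y ^ (4-1) • (fun y => Real.exp (-y^2) * Real.sin (t*y^2)^2 / y^4) y
  have hI : (Real.exp (-1) / 8) * (Real.log t + Real.log 4 - Real.log π) ≤ I := by
    have := oneD_bound t ht hθ
    simpa [I] using this
  have homega : omegaSurf 4 = 4 * c := by
    rw [omegaSurf, hc]; norm_num
  rw [homega, nsmul_eq_mul, smul_eq_mul]
  calc 4 * c * Real.exp (-1) / 8 * (Real.log t + Real.log 4 - Real.log π)
      = 4 * (c * ((Real.exp (-1) / 8) * (Real.log t + Real.log 4 - Real.log π))) := by ring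
    _ ≤ 4 * (c * I) := by gcongr
end

section
/- There exists a constant C > 0 such that for all sufficiently large t > 1, ∫₀^∞ e^{−r²} sin²(t r²) r^{−1} dr ≥ C log t. -/
open MeasureTheory Set intervalIntegral

private lemma upos {t u : ℝ} (ht : 1 ≤ t) (hu : u ∈ Set.uIcc (1:ℝ) t) : 0 < u := by
  rw [Set.uIcc_of_le ht] at hu
  exact lt_of_lt_of_le one_pos hu.1

private lemma remainder_bound {t : ℝ} (ht : 1 ≤ t) :
    |∫ u in (1:ℝ)..t, Real.sin (2*u)/(8*u^2)| ≤ 1/8 := by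
  have hint : IntervalIntegrable (fun u => Real.sin (2*u)/(8*u^2)) volume 1 t := by
    apply ContinuousOn.intervalIntegrable
    exact ContinuousOn.div (by fun_prop) (by fun_prop)
      (fun u hu => by have := upos ht hu; positivity)
  have hint2 : IntervalIntegrable (fun u : ℝ => 1/(8*u^2)) volume 1 t := by
    apply ContinuousOn.intervalIntegrable
    exact ContinuousOn.div (by fun_prop) (by fun_prop)
      (fun u hu => by have := upos ht hu; positivity)
  have hval : (∫ u in (1:ℝ)..t, 1/(8*u^2)) = 1/8 - 1/(8*t) := by
    have hd : ∀ u ∈ Set.uIcc (1:ℝ) t, HasDerivAt (fun u : ℝ => -(1/(8*u))) (1/(8*u^2)) u := by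
      intro u hu
      have hu0 := upos ht hu
      have h3 : HasDerivAt (fun u : ℝ => (8:ℝ)*u) 8 u := by simpa using (hasDerivAt_id u).const_mul 8
      have h4 := ((hasDerivAt_const u (1:ℝ)).div h3 (by positivity)).neg
      refine h4.congr_deriv ?_
      field_simp
      ring
    rw [integral_eq_sub_of_hasDerivAt hd hint2]
    field_simp
    ring
  calc |∫ u in (1:ℝ)..t, Real.sin (2*u)/(8*u^2)|
      ≤ ∫ u in (1:ℝ)..t, |Real.sin (2*u)/(8*u^2)| :=
        intervalIntegral.abs_integral_le_integral_abs ht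
    _ ≤ ∫ u in (1:ℝ)..t, 1/(8*u^2) := by
        apply integral_mono_on ht hint.abs hint2
        intro u hu
        have hu0 : (0:ℝ) < u := lt_of_lt_of_le one_pos hu.1
        rw [abs_div, abs_of_pos (by positivity : (0:ℝ) < 8*u^2)]
        gcongr
        exact Real.abs_sin_le_one _
    _ = 1/8 - 1/(8*t) := hval
    _ ≤ 1/8 := by
        have : 0 < t := lt_of_lt_of_le one_pos ht
        have : 0 ≤ 1/(8*t) := by positivity
        linarith

private lemma sin_sq_integral_lb {t : ℝ} (ht : 1 ≤ t) :
    Real.log t / 4 - 3/8 ≤ ∫ u in (1:ℝ)..t, Real.sin u ^ 2 / (2*u) := by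
  have hder : ∀ u ∈ Set.uIcc (1:ℝ) t,
      HasDerivAt (fun u => Real.log u / 4 - Real.sin (2*u)/(8*u))
      (Real.sin u ^ 2 / (2*u) + Real.sin (2*u)/(8*u^2)) u := by
    intro u hu
    have hu0 := upos ht hu
    have h1 : HasDerivAt (fun u : ℝ => Real.log u / 4) (u⁻¹ / 4) u :=
      (Real.hasDerivAt_log hu0.ne').div_const 4
    have h2 : HasDerivAt (fun u : ℝ => Real.sin (2*u)) (Real.cos (2*u) * 2) u :=
      (Real.hasDerivAt_sin (2*u)).comp u (by simpa using (hasDerivAt_id u).const_mul 2)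
    have h3 : HasDerivAt (fun u : ℝ => (8:ℝ)*u) 8 u := by simpa using (hasDerivAt_id u).const_mul 8
    have h4 := h2.div h3 (by positivity)
    have h5 := h1.sub h4
    refine h5.congr_deriv ?_
    have hc : Real.cos (2*u) = 1 - 2 * Real.sin u ^ 2 := by
      rw [Real.cos_two_mul']
      nlinarith [Real.sin_sq_add_cos_sq u]
    rw [hc]
    field_simp
    ring
  have hcont1 : IntervalIntegrable (fun u => Real.sin u ^ 2 / (2*u)) volume 1 t := by
    apply ContinuousOn.intervalIntegrable
    exact ContinuousOn.div (by fun_prop) (by fun_prop)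
      (fun u hu => by have := upos ht hu; positivity)
  have hcont2 : IntervalIntegrable (fun u => Real.sin (2*u)/(8*u^2)) volume 1 t := by
    apply ContinuousOn.intervalIntegrable
    exact ContinuousOn.div (by fun_prop) (by fun_prop)
      (fun u hu => by have := upos ht hu; positivity)
  have hFTC := integral_eq_sub_of_hasDerivAt hder (hcont1.add hcont2)
  rw [integral_add hcont1 hcont2] at hFTC
  have hR := remainder_bound ht
  have h2 : |Real.sin (2*t)/(8*t)| ≤ 1/8 := by
    rw [abs_div, abs_of_pos (by linarith : (0:ℝ) < 8*t)]
    rw [div_le_iff₀ (by linarith : (0:ℝ) < 8*t)]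
    calc |Real.sin (2*t)| ≤ 1 := Real.abs_sin_le_one _
      _ ≤ 1/8 * (8*t) := by linarith
  have habs2 := abs_le.mp h2
  have habsR := abs_le.mp hR
  have h1 : |Real.sin (2*1)/(8*1)| ≤ 1/8 := by
    rw [abs_div, abs_of_pos (by norm_num : (0:ℝ) < 8*1)]
    rw [div_le_iff₀ (by norm_num : (0:ℝ) < 8*1)]
    norm_num
    exact Real.abs_sin_le_one 2
  have habs1 := abs_le.mp h1
  have hlog1 : Real.log 1 = 0 := Real.log_one
  have : (∫ u in (1:ℝ)..t, Real.sin u ^ 2 / (2*u)) =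
      (Real.log t / 4 - Real.sin (2*t)/(8*t)) - (Real.log 1 / 4 - Real.sin (2*1)/(8*1))
      - ∫ u in (1:ℝ)..t, Real.sin (2*u)/(8*u^2) := by linarith
  rw [this, hlog1]
  linarith

private lemma exp3_le : Real.exp 3 ≤ 25 := by
  have h := Real.exp_one_lt_d9
  have h0 : (0:ℝ) ≤ Real.exp 1 := (Real.exp_pos 1).le
  calc Real.exp 3 = Real.exp 1 ^ (3:ℕ) := by
        rw [← Real.exp_nat_mul]; norm_num
    _ ≤ 2.7182818286 ^ (3:ℕ) := pow_le_pow_left₀ h0 h.le 3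
    _ ≤ 25 := by norm_num

private lemma exp_neg_one_ge : (1:ℝ)/3 ≤ Real.exp (-1) := by
  rw [Real.exp_neg, one_div]
  apply inv_anti₀ (Real.exp_pos 1)
  calc Real.exp 1 ≤ 2.7182818286 := Real.exp_one_lt_d9.le
    _ ≤ 3 := by norm_num

theorem radial_log_lower_bound :
    ∃ C > 0, ∃ T > 1, ∀ t : ℝ, T ≤ t →
      ∫ r in Set.Ioi (0 : ℝ), Real.exp (-r ^ 2) * Real.sin (t * r ^ 2) ^ 2 / r ≥
        C * Real.log t := by
  refine ⟨1/24, by norm_num, 25, by norm_num, fun t ht => ?_⟩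
  have ht1 : (1:ℝ) ≤ t := by linarith
  have ht0 : (0:ℝ) < t := by linarith
  have hlog3 : (3:ℝ) ≤ Real.log t := by
    rw [Real.le_log_iff_exp_le ht0]
    exact exp3_le.trans ht
  set f : ℝ → ℝ := fun r => Real.exp (-r ^ 2) * Real.sin (t * r ^ 2) ^ 2 / r with hf
  set a : ℝ := (Real.sqrt t)⁻¹ with ha
  have hsqrt1 : 1 ≤ Real.sqrt t := by
    rw [show (1:ℝ) = Real.sqrt 1 from (Real.sqrt_one).symm]
    exact Real.sqrt_le_sqrt ht1
  have hsqrt0 : 0 < Real.sqrt t := lt_of_lt_of_le one_pos hsqrt1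
  have ha0 : 0 < a := by positivity
  have ha1 : a ≤ 1 := by
    rw [ha]; exact inv_le_one_of_one_le₀ hsqrt1
  have hta : t * a ^ 2 = 1 := by
    rw [ha, inv_pow, Real.sq_sqrt ht0.le]
    field_simp
  -- integrability on Ioi 0
  have hfmeas : AEStronglyMeasurable f (volume.restrict (Set.Ioi (0:ℝ))) := by
    apply ContinuousOn.aestronglyMeasurable _ measurableSet_Ioi
    exact ContinuousOn.div (by fun_prop) continuousOn_id (fun r hr => ne_of_gt hr)
  have hIntOn : IntegrableOn f (Set.Ioi 0) volume := by
    have hbase : IntegrableOn (fun x : ℝ => x ^ (3:ℝ) * Real.exp (-1 * x ^ 2)) (Set.Ioi 0)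
        volume := integrableOn_rpow_mul_exp_neg_mul_sq one_pos (by norm_num)
    have hb : IntegrableOn (fun x : ℝ => t^2 * (x ^ (3:ℝ) * Real.exp (-1 * x ^ 2)))
        (Set.Ioi 0) volume := hbase.const_mul _
    apply Integrable.mono' hb hfmeas
    rw [ae_restrict_iff' measurableSet_Ioi]
    refine ae_of_all _ fun r hr => ?_
    have hr0 : 0 < r := hr
    have hfr0 : 0 ≤ f r := by
      rw [hf]; positivity
    rw [Real.norm_eq_abs, abs_of_nonneg hfr0]
    have hsin : Real.sin (t * r ^ 2) ^ 2 ≤ (t * r ^ 2) ^ 2 := by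
      rw [← sq_abs (Real.sin _), ← sq_abs (t * r^2)]
      exact pow_le_pow_left₀ (abs_nonneg _) (Real.abs_sin_le_abs) 2
    have hrpow : r ^ (3:ℝ) = r ^ (3:ℕ) := by
      rw [← Real.rpow_natCast r 3]; norm_num
    rw [hf]
    simp only []
    rw [hrpow]
    rw [div_le_iff₀ hr0]
    have hexp : Real.exp (-1 * r ^ 2) = Real.exp (-r ^ 2) := by norm_num
    rw [hexp]
    nlinarith [Real.exp_pos (-r^2), sq_nonneg (Real.sin (t*r^2)), hsin,
      mul_pos (mul_pos ht0 ht0) (pow_pos hr0 4)]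
  -- restrict to Ioc a 1
  have hnonneg : 0 ≤ᵐ[volume.restrict (Set.Ioi (0:ℝ))] f := by
    filter_upwards [ae_restrict_mem measurableSet_Ioi] with r hr
    have : (0:ℝ) < r := hr
    simp only [hf, Pi.zero_apply]
    positivity
  have hsub : Set.Ioc a 1 ⊆ Set.Ioi (0:ℝ) := fun r hr => lt_of_lt_of_le ha0 hr.1.le
  have step1 : ∫ r in Set.Ioc a 1, f r ≤ ∫ r in Set.Ioi (0:ℝ), f r :=
    setIntegral_mono_set hIntOn hnonneg (HasSubset.Subset.eventuallyLE hsub)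
  -- lower bound exp(-r^2) by exp(-1)
  set g : ℝ → ℝ := fun r => Real.exp (-1) * Real.sin (t * r ^ 2) ^ 2 / r with hg
  have hgint : IntegrableOn g (Set.Ioc a 1) volume := by
    apply (ContinuousOn.integrableOn_Icc ?_).mono_set Set.Ioc_subset_Icc_self
    apply ContinuousOn.div (by fun_prop) continuousOn_id
    intro r hr
    exact ne_of_gt (lt_of_lt_of_le ha0 hr.1)
  have step2 : ∫ r in Set.Ioc a 1, g r ≤ ∫ r in Set.Ioc a 1, f r := by
    apply setIntegral_mono_on hgint (hIntOn.mono_set hsub) measurableSet_Ioc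
    intro r hr
    have hr0 : 0 < r := lt_of_lt_of_le ha0 hr.1.le
    have hr1 : r ≤ 1 := hr.2
    have hexp : Real.exp (-1) ≤ Real.exp (-r ^ 2) := by
      apply Real.exp_le_exp.mpr
      nlinarith
    show Real.exp (-1) * Real.sin (t * r ^ 2) ^ 2 / r ≤
      Real.exp (-r ^ 2) * Real.sin (t * r ^ 2) ^ 2 / r
    gcongr
  -- interval integral and substitution
  have step3 : ∫ r in Set.Ioc a 1, g r = ∫ r in a..1, g r :=
    (intervalIntegral.integral_of_le ha1).symm
  set G : ℝ → ℝ := fun u => Real.exp (-1) * Real.sin u ^ 2 / (2 * u) with hG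
  have himg : (fun r => t * r ^ 2) '' Set.uIcc a 1 ⊆ {u : ℝ | 1 ≤ u} := by
    rintro u ⟨r, hr, rfl⟩
    rw [Set.uIcc_of_le ha1] at hr
    have : a ^ 2 ≤ r ^ 2 := by
      apply pow_le_pow_left₀ ha0.le hr.1
    calc (1:ℝ) = t * a ^ 2 := hta.symm
      _ ≤ t * r ^ 2 := by nlinarith
  have hsubst : ∫ r in a..1, (G ∘ (fun r => t * r ^ 2)) r * (2 * t * r) =
      ∫ u in (t * a ^ 2)..(t * 1 ^ 2), G u := by
    apply intervalIntegral.integral_comp_mul_deriv'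
    · intro r _
      have h := (hasDerivAt_pow 2 r).const_mul t
      refine h.congr_deriv ?_
      push_cast
      ring
    · fun_prop
    · apply ContinuousOn.mono _ himg
      apply ContinuousOn.div (by fun_prop) (by fun_prop)
      intro u hu
      have : (1:ℝ) ≤ u := hu
      positivity
  have step4 : ∫ r in a..1, g r = ∫ u in (t * a ^ 2)..(t * 1 ^ 2), G u := by
    rw [← hsubst]
    apply intervalIntegral.integral_congr
    intro r hr
    rw [Set.uIcc_of_le ha1] at hr
    have hr0 : 0 < r := lt_of_lt_of_le ha0 hr.1
    simp only [hg, hG, Function.comp]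
    field_simp
  have step4' : ∫ r in a..1, g r = ∫ u in (1:ℝ)..t, G u := by
    rw [step4, hta]
    norm_num
  have step5 : ∫ u in (1:ℝ)..t, G u =
      Real.exp (-1) * ∫ u in (1:ℝ)..t, Real.sin u ^ 2 / (2 * u) := by
    rw [← intervalIntegral.integral_const_mul]
    apply intervalIntegral.integral_congr
    intro u _
    rw [hG]
    ring
  have hI := sin_sq_integral_lb ht1
  have hchain : (1/24 : ℝ) * Real.log t ≤ ∫ r in Set.Ioi (0:ℝ), f r := by
    calc (1/24 : ℝ) * Real.log t ≤ Real.exp (-1) * (Real.log t / 4 - 3/8) := by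
          nlinarith [mul_nonneg (sub_nonneg.mpr exp_neg_one_ge)
            (by linarith : (0:ℝ) ≤ Real.log t / 4 - 3/8)]
      _ ≤ Real.exp (-1) * ∫ u in (1:ℝ)..t, Real.sin u ^ 2 / (2 * u) :=
          mul_le_mul_of_nonneg_left hI (Real.exp_pos _).le
      _ = ∫ u in (1:ℝ)..t, G u := step5.symm
      _ = ∫ r in a..1, g r := step4'.symm
      _ = ∫ r in Set.Ioc a 1, g r := step3.symm
      _ ≤ ∫ r in Set.Ioc a 1, f r := step2
      _ ≤ ∫ r in Set.Ioi (0:ℝ), f r := step1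
  exact hchain
end
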